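/- For M = I_n the n×n identity matrix and any n ≥ 4, the level-1 dense bound for the nonnegative rank satisfies ξ^{+}_1(I_n) ≤ 8(n−2)/n < 8. -/

import Mathlib

open Matrix MvPolynomial Finset

set_option linter.unusedSectionVars false

section aux
variable {σ : Type*} [Fintype σ] [DecidableEq σ]

/-- exponent vector of a single variable -/
noncomputable def Eexp (α : σ) : σ →₀ ℕ := Finsupp.single α 1

lemma Eexp_ne_zero (α : σ) : Eexp α ≠ 0 :=
  fun h => one_ne_zero (Finsupp.single_eq_zero.mp h)

lemma Eexp_add_ne_zero (α β : σ) : Eexp α + Eexp β ≠ 0 := by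
  intro h
  have : (Eexp α + Eexp β) α = 0 := by rw [h]; rfl
  simp [Eexp, Finsupp.single_apply] at this

lemma Eexp_inj {α β : σ} : Eexp α = Eexp β ↔ α = β :=
  Finsupp.single_left_inj one_ne_zero

lemma Eexp_ne_add (γ α β : σ) : Eexp γ ≠ Eexp α + Eexp β := by
  intro h
  have := congrArg (fun f : σ →₀ ℕ => f.sum fun _ k => k) h
  simp only [Eexp] at this
  rw [Finsupp.sum_add_index' (fun _ => rfl) (fun _ _ _ => rfl)] at this
  simp [Finsupp.sum_single_index] at this

lemma Eexp_add_eq_add {γ δ α β : σ} :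
    Eexp α + Eexp β = Eexp γ + Eexp δ ↔ (α = γ ∧ β = δ) ∨ (α = δ ∧ β = γ) := by
  rw [Eexp, Eexp, Eexp, Eexp,
    Finsupp.single_add_single_eq_single_add_single one_ne_zero one_ne_zero]
  simp

/-- The pseudo-moment functional with moments `a` (constant), `b` (degree one) and
`H α β + H β α` (resp. `H α α`) in degree two. -/
noncomputable def LL (a b : ℝ) (H : σ → σ → ℝ) : MvPolynomial σ ℝ →ₗ[ℝ] ℝ :=
  a • lcoeff ℝ 0 + (∑ α : σ, b • lcoeff ℝ (Eexp α)) +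
    ∑ α : σ, ∑ β : σ, H α β • lcoeff ℝ (Eexp α + Eexp β)

lemma LL_apply (a b : ℝ) (H : σ → σ → ℝ) (p : MvPolynomial σ ℝ) :
    LL a b H p = a * coeff 0 p + (∑ α : σ, b * coeff (Eexp α) p) +
      ∑ α : σ, ∑ β : σ, H α β * coeff (Eexp α + Eexp β) p := by
  simp [LL, LinearMap.sum_apply, smul_eq_mul]

lemma LL_one (a b : ℝ) (H : σ → σ → ℝ) : LL a b H 1 = a := by
  rw [LL_apply]
  have h1 : ∀ α : σ, coeff (Eexp α) (1 : MvPolynomial σ ℝ) = 0 := fun α => by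
    rw [coeff_one, if_neg (fun h => Eexp_ne_zero α h.symm)]
  have h2 : ∀ α β : σ, coeff (Eexp α + Eexp β) (1 : MvPolynomial σ ℝ) = 0 := fun α β => by
    rw [coeff_one, if_neg (fun h => Eexp_add_ne_zero α β h.symm)]
  simp [h1, h2]

lemma LL_X (a b : ℝ) (H : σ → σ → ℝ) (γ : σ) : LL a b H (X γ) = b := by
  rw [LL_apply]
  have h0 : coeff 0 (X γ : MvPolynomial σ ℝ) = 0 := by
    rw [coeff_X', show Finsupp.single γ 1 = Eexp γ from rfl, if_neg (Eexp_ne_zero γ)]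
  have h1 : ∀ α : σ, coeff (Eexp α) (X γ : MvPolynomial σ ℝ) = if α = γ then 1 else 0 := by
    intro α
    rw [coeff_X', show Finsupp.single γ 1 = Eexp γ from rfl]
    exact if_congr (Eexp_inj.trans eq_comm) rfl rfl
  have h2 : ∀ α β : σ, coeff (Eexp α + Eexp β) (X γ : MvPolynomial σ ℝ) = 0 := fun α β => by
    rw [coeff_X', show Finsupp.single γ 1 = Eexp γ from rfl, if_neg (Eexp_ne_add γ α β)]
  rw [h0]
  simp only [h1, h2, mul_zero, Finset.sum_const_zero, add_zero, mul_ite, mul_one]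
  simp

lemma LL_XX (a b : ℝ) (H : σ → σ → ℝ) (γ δ : σ) :
    LL a b H (X γ * X δ) = if γ = δ then H γ γ else H γ δ + H δ γ := by
  rw [LL_apply]
  have hXX : (X γ * X δ : MvPolynomial σ ℝ) = monomial (Eexp γ + Eexp δ) 1 := by
    rw [X, X, monomial_mul, one_mul]; rfl
  have h0 : coeff 0 (X γ * X δ : MvPolynomial σ ℝ) = 0 := by
    rw [hXX, coeff_monomial, if_neg (Eexp_add_ne_zero γ δ)]
  have h1 : ∀ α : σ, coeff (Eexp α) (X γ * X δ : MvPolynomial σ ℝ) = 0 := fun α => by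
    rw [hXX, coeff_monomial, if_neg (fun h => Eexp_ne_add α γ δ h.symm)]
  have h2 : ∀ α β : σ, coeff (Eexp α + Eexp β) (X γ * X δ : MvPolynomial σ ℝ) =
      if (α = γ ∧ β = δ) ∨ (α = δ ∧ β = γ) then 1 else 0 := fun α β => by
    rw [hXX, coeff_monomial]
    exact if_congr (eq_comm.trans Eexp_add_eq_add) rfl rfl
  rw [h0]
  simp only [h1, h2, mul_zero, Finset.sum_const_zero, add_zero, zero_add, mul_ite, mul_one]
  rw [← Finset.sum_product']
  have hmem : ∀ p : σ × σ, ((p.1 = γ ∧ p.2 = δ) ∨ (p.1 = δ ∧ p.2 = γ)) ↔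
      p ∈ ({(γ, δ), (δ, γ)} : Finset (σ × σ)) := by
    intro p
    simp [Prod.ext_iff]
  have : (∑ p ∈ Finset.univ ×ˢ Finset.univ,
        if (p.1 = γ ∧ p.2 = δ) ∨ (p.1 = δ ∧ p.2 = γ) then H p.1 p.2 else 0)
      = ∑ p ∈ ({(γ, δ), (δ, γ)} : Finset (σ × σ)), H p.1 p.2 := by
    rw [Finset.sum_congr rfl (fun p _ => if_congr (hmem p) rfl rfl), Finset.sum_ite_mem,
      Finset.univ_product_univ, Finset.univ_inter]
  rw [this]
  by_cases h : γ = δ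
  · subst h
    simp
  · rw [Finset.sum_pair (by simp [Prod.ext_iff, h, Ne.symm h])]
    simp [h]

end aux

noncomputable def Hmat (n : ℕ) (b d : ℝ) : (Fin n ⊕ Fin n) → (Fin n ⊕ Fin n) → ℝ
  | .inl i, .inl j => if i = j then b else d / 2
  | .inr i, .inr j => if i = j then b else d / 2
  | .inl i, .inr j => if i = j then 1 / 2 else 0
  | .inr i, .inl j => if i = j then 1 / 2 else 0


lemma quad_nonneg (n : ℕ) (hn : 4 ≤ n) (t : ℝ) (u v : Fin n → ℝ) :
    0 ≤ t * (8 * ((n : ℝ) - 2) / n * t +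
        (2 * ((n : ℝ) - 2) / n * ∑ i : Fin n, u i + 2 * ((n : ℝ) - 2) / n * ∑ i : Fin n, v i)) +
      ((∑ i : Fin n, u i * (2 * ((n : ℝ) - 2) / n * t +
          (((n : ℝ) - 4) / n * ∑ j : Fin n, u j +
            (2 * ((n : ℝ) - 2) / n - ((n : ℝ) - 4) / n) * u i + v i))) +
        ∑ i : Fin n, v i * (2 * ((n : ℝ) - 2) / n * t +
          (u i + (((n : ℝ) - 4) / n * ∑ j : Fin n, v j +
            (2 * ((n : ℝ) - 2) / n - ((n : ℝ) - 4) / n) * v i)))) := by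
  have hN : (4 : ℝ) ≤ (n : ℝ) := by exact_mod_cast hn
  set N : ℝ := (n : ℝ) with hNdef
  have hNpos : (0 : ℝ) < N := by linarith
  have hN0 : N ≠ 0 := ne_of_gt hNpos
  have hN2 : N - 2 ≠ 0 := by intro h; linarith
  set a : ℝ := 8 * (N - 2) / N with hadef
  set b : ℝ := 2 * (N - 2) / N with hbdef
  set d : ℝ := (N - 4) / N with hddef
  have hapos : 0 < a := by rw [hadef]; apply div_pos <;> nlinarith
  have hdnn : 0 ≤ d := by rw [hddef]; apply div_nonneg <;> linarith
  set P : ℝ := ∑ i : Fin n, u i with hPdef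
  set Q : ℝ := ∑ i : Fin n, v i with hQdef
  set A : ℝ := ∑ i : Fin n, u i * u i with hAdef
  set B : ℝ := ∑ i : Fin n, v i * v i with hBdef
  set C : ℝ := ∑ i : Fin n, u i * v i with hCdef
  have e1 : (∑ i : Fin n, u i * (b * t + (d * P + (b - d) * u i + v i)))
      = (b * t + d * P) * P + ((b - d) * A + C) := by
    rw [Finset.sum_congr rfl (fun i _ => (by ring :
      u i * (b * t + (d * P + (b - d) * u i + v i))
        = (b * t + d * P) * u i + ((b - d) * (u i * u i) + u i * v i)))]
    rw [Finset.sum_add_distrib, Finset.sum_add_distrib, ← Finset.mul_sum, ← Finset.mul_sum,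
      ← hPdef, ← hAdef, ← hCdef]
  have e2 : (∑ i : Fin n, v i * (b * t + (u i + (d * Q + (b - d) * v i))))
      = (b * t + d * Q) * Q + ((b - d) * B + C) := by
    rw [Finset.sum_congr rfl (fun i _ => (by ring :
      v i * (b * t + (u i + (d * Q + (b - d) * v i)))
        = (b * t + d * Q) * v i + ((b - d) * (v i * v i) + u i * v i)))]
    rw [Finset.sum_add_distrib, Finset.sum_add_distrib, ← Finset.mul_sum, ← Finset.mul_sum,
      ← hQdef, ← hBdef, ← hCdef]
  rw [e1, e2]
  have hS2 : (∑ i : Fin n, (u i + v i) ^ 2) = A + 2 * C + B := by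
    rw [Finset.sum_congr rfl (fun i _ => (by ring :
      (u i + v i) ^ 2 = u i * u i + 2 * (u i * v i) + v i * v i))]
    rw [Finset.sum_add_distrib, Finset.sum_add_distrib, ← Finset.mul_sum,
      ← hAdef, ← hBdef, ← hCdef]
  have hPQ : P + Q = ∑ i : Fin n, (u i + v i) := by
    rw [Finset.sum_add_distrib, ← hPdef, ← hQdef]
  have hcheb : (P + Q) ^ 2 ≤ N * (A + 2 * C + B) := by
    have := sq_sum_le_card_mul_sum_sq (s := (Finset.univ : Finset (Fin n)))
      (f := fun i => u i + v i)
    rw [← hS2, hPQ]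
    simpa [hNdef] using this
  have key : t * (a * t + (b * P + b * Q)) +
      ((b * t + d * P) * P + ((b - d) * A + C) + ((b * t + d * Q) * Q + ((b - d) * B + C)))
      = (a * t + b * (P + Q)) ^ 2 / a + ((A + 2 * C + B) - (P + Q) ^ 2 / N)
        + (d / 2) * (P - Q) ^ 2 := by
    rw [hadef, hbdef, hddef]
    field_simp
    ring
  rw [key]
  have t1 : 0 ≤ (a * t + b * (P + Q)) ^ 2 / a := div_nonneg (sq_nonneg _) hapos.le
  have t2 : 0 ≤ (A + 2 * C + B) - (P + Q) ^ 2 / N := by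
    rw [sub_nonneg, div_le_iff₀ hNpos]
    linarith [hcheb]
  have t3 : 0 ≤ (d / 2) * (P - Q) ^ 2 := mul_nonneg (by linarith) (sq_nonneg _)
  linarith

/-- For `M = Iₙ` and any `n ≥ 4`, the level-1 dense bound for the
nonnegative rank satisfies `ξ⁺₁(Iₙ) ≤ 8(n−2)/n < 8`.  Variables are indexed by
`Fin n ⊕ Fin n` (rows `U = inl`, columns `W = inr`). -/
theorem dense_nn_bound_small_on_identity
    (n : ℕ) (hn : 4 ≤ n) :
    sInf {v : EReal | ∃ L : MvPolynomial (Fin n ⊕ Fin n) ℝ →ₗ[ℝ] ℝ,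
        1 ≤ L 1 ∧
        (∀ i : Fin n ⊕ Fin n, L (X i ^ 2) ≤ L (X i)) ∧
        (∀ i j : Fin n, L (X (Sum.inl i) * X (Sum.inr j)) = if i = j then 1 else 0) ∧
        Matrix.PosSemidef (Matrix.of (fun α β =>
            match α, β with
            | none, none => L 1
            | none, some i => L (X i)
            | some i, none => L (X i)
            | some i, some j => L (X i * X j)) :
          Matrix (Option (Fin n ⊕ Fin n)) (Option (Fin n ⊕ Fin n)) ℝ) ∧
        v = ((L 1 : ℝ) : EReal)}
      ≤ ((8 * ((n : ℝ) - 2) / n : ℝ) : EReal) ∧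
    8 * ((n : ℝ) - 2) / n < 8 := by
  have hN : (4 : ℝ) ≤ (n : ℝ) := by exact_mod_cast hn
  have hNpos : (0 : ℝ) < n := by linarith
  have hN0 : (n : ℝ) ≠ 0 := ne_of_gt hNpos
  set N : ℝ := (n : ℝ) with hNdef
  set a : ℝ := 8 * (N - 2) / N with hadef
  set b : ℝ := 2 * (N - 2) / N with hbdef
  set d : ℝ := (N - 4) / N with hddef
  have hapos : 0 < a := by rw [hadef]; apply div_pos <;> nlinarith
  have hdnn : 0 ≤ d := by rw [hddef]; apply div_nonneg <;> linarith
  set L : MvPolynomial (Fin n ⊕ Fin n) ℝ →ₗ[ℝ] ℝ := LL a b (Hmat n b d) with hLdef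
  have hL1 : L 1 = a := LL_one a b _
  have hLX : ∀ α, L (X α) = b := fun α => LL_X a b _ α
  have hGll : ∀ i j : Fin n, L (X (Sum.inl i) * X (Sum.inl j)) = if i = j then b else d := by
    intro i j
    rw [hLdef, LL_XX]
    by_cases h : i = j
    · subst h; simp [Hmat]
    · have h2 : ¬j = i := fun hh => h hh.symm
      have h' : (Sum.inl i : Fin n ⊕ Fin n) ≠ Sum.inl j := by simp [h]
      rw [if_neg h', if_neg h]
      simp only [Hmat, if_neg h, if_neg h2]
      ring
  have hGrr : ∀ i j : Fin n, L (X (Sum.inr i) * X (Sum.inr j)) = if i = j then b else d := by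
    intro i j
    rw [hLdef, LL_XX]
    by_cases h : i = j
    · subst h; simp [Hmat]
    · have h2 : ¬j = i := fun hh => h hh.symm
      have h' : (Sum.inr i : Fin n ⊕ Fin n) ≠ Sum.inr j := by simp [h]
      rw [if_neg h', if_neg h]
      simp only [Hmat, if_neg h, if_neg h2]
      ring
  have hGlr : ∀ i j : Fin n, L (X (Sum.inl i) * X (Sum.inr j)) = if i = j then 1 else 0 := by
    intro i j
    rw [hLdef, LL_XX, if_neg (by simp : (Sum.inl i : Fin n ⊕ Fin n) ≠ Sum.inr j)]
    by_cases h : i = j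
    · subst h; simp only [Hmat, if_pos rfl, if_pos rfl]; norm_num
    · have h2 : ¬j = i := fun hh => h hh.symm
      simp only [Hmat, if_neg h, if_neg h2]
      norm_num
  have hGrl : ∀ i j : Fin n, L (X (Sum.inr i) * X (Sum.inl j)) = if i = j then 1 else 0 := by
    intro i j
    rw [hLdef, LL_XX, if_neg (by simp : (Sum.inr i : Fin n ⊕ Fin n) ≠ Sum.inl j)]
    by_cases h : i = j
    · subst h; simp only [Hmat, if_pos rfl, if_pos rfl]; norm_num
    · have h2 : ¬j = i := fun hh => h hh.symm
      simp only [Hmat, if_neg h, if_neg h2]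
      norm_num
  have hXsq : ∀ α : Fin n ⊕ Fin n, L (X α ^ 2) = b := by
    intro α
    rw [sq]
    cases α with
    | inl i => rw [hGll]; simp
    | inr i => rw [hGrr]; simp
  constructor
  · apply sInf_le
    refine ⟨L, ?_, ?_, ?_, ?_, by rw [hL1]⟩
    · rw [hL1, hadef, le_div_iff₀ hNpos]; nlinarith
    · intro α; rw [hXsq, hLX]
    · exact hGlr
    · refine Matrix.PosSemidef.of_dotProduct_mulVec_nonneg ?_ ?_
      · ext α β
        cases α <;> cases β <;>
          simp only [Matrix.conjTranspose_apply, Matrix.of_apply, star_trivial]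
        case some.some α β => exact congrArg L (mul_comm _ _)
      · intro x
        simp only [dotProduct, mulVec, Fintype.sum_option, Fintype.sum_sum_type,
          Matrix.of_apply, star_trivial, hL1, hLX, hGll, hGrr, hGlr, hGrl]
        have hsumb : ∀ (w : Fin n → ℝ) (i : Fin n),
            (∑ j, (if i = j then b else d) * w j) = d * (∑ j, w j) + (b - d) * w i := by
          intro w i
          rw [Finset.sum_congr rfl (fun j _ => (by split_ifs with h <;> first | (subst h; ring) | ring :
            (if i = j then b else d) * w j = d * w j + (if i = j then (b - d) * w j else 0)))]
          rw [Finset.sum_add_distrib, ← Finset.mul_sum, Finset.sum_ite_eq]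
          simp
        have hsum1 : ∀ (w : Fin n → ℝ) (i : Fin n),
            (∑ j, (if i = j then (1:ℝ) else 0) * w j) = w i := by
          intro w i
          simp [ite_mul, Finset.sum_ite_eq]
        simp only [hsumb, hsum1, ← Finset.mul_sum]
        exact quad_nonneg n hn (x none) (fun i => x (some (Sum.inl i)))
          (fun i => x (some (Sum.inr i)))
  · rw [div_lt_iff₀ hNpos]; nlinarith
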